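/- Let b_a, y_a satisfy 0 < b_a < y_a, let θ̄ ∈ [0,1) with θ := 1 − θ̄ and b_a/y_a > θ̄, and let α̂ be the minimal admissible slope, given by α̂ = 2(1 − b_a/y_a)/y_a if b_a/y_a ≥ (1 + θ̄)/2 and α̂ = θ²/(2(b_a − θ̄·y_a)) otherwise. Then the unconstrained maximal cutoff x̂_U(α) is monotonically increasing in α, x̂_U(α̂) = 0, and for every α ≥ α̂ one has 0 ≤ x̂_U(α) ≤ y_a. -/

import Mathlib

noncomputable section

namespace PAMM

/-- The unconstrained maximal upper cutoff `x̂_U(α)`: equal to `y_a − √(2Δ_a/α)` when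
    `α·Δ_a ≤ θ²/2` and `y_a − Δ_a/θ − θ/(2α)` otherwise, where `Δ_a := y_a − b_a`
    and `θ := 1 − θ̄`. -/
def xUHat (θbar α ba ya : ℝ) : ℝ :=
  if α * (ya - ba) ≤ (1 - θbar) ^ 2 / 2 then ya - Real.sqrt (2 * (ya - ba) / α)
  else ya - (ya - ba) / (1 - θbar) - (1 - θbar) / (2 * α)

/-- sanity lemma for `x̂_U`: `x̂_U(α)` is monotonically increasing
    in `α` (on positive slopes), `x̂_U(α̂) = 0` for the minimal admissible slope `α̂`,
    and `0 ≤ x̂_U(α) ≤ y_a` for every `α ≥ α̂`. -/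
theorem xUHat_monotone_and_bounded
    (ba ya θbar : ℝ)
    (hba : 0 < ba) (hbya : ba < ya)
    (hθ0 : 0 ≤ θbar) (hθ1 : θbar < 1)
    (hra : θbar < ba / ya) :
    let θ : ℝ := 1 - θbar
    let αhat : ℝ := if (1 + θbar) / 2 ≤ ba / ya then 2 * (1 - ba / ya) / ya
      else θ ^ 2 / (2 * (ba - θbar * ya))
    MonotoneOn (fun α => xUHat θbar α ba ya) (Set.Ioi (0:ℝ)) ∧
    xUHat θbar αhat ba ya = 0 ∧
    (∀ α : ℝ, αhat ≤ α → 0 ≤ xUHat θbar α ba ya ∧ xUHat θbar α ba ya ≤ ya) := by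
  intro θ αhat
  have hya : 0 < ya := hba.trans hbya
  have hΔ : 0 < ya - ba := by linarith
  have hθ : 0 < 1 - θbar := by linarith
  have hbθ : θbar * ya < ba := (lt_div_iff₀ hya).mp hra
  -- Monotonicity
  have hmono : MonotoneOn (fun α => xUHat θbar α ba ya) (Set.Ioi (0:ℝ)) := by
    intro a ha b hb hab
    simp only [Set.mem_Ioi] at ha hb
    simp only [xUHat]
    by_cases hbc : b * (ya - ba) ≤ (1 - θbar) ^ 2 / 2
    · have hac : a * (ya - ba) ≤ (1 - θbar) ^ 2 / 2 := le_trans (by nlinarith) hbc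
      rw [if_pos hac, if_pos hbc]
      have h := Real.sqrt_le_sqrt (show 2 * (ya - ba) / b ≤ 2 * (ya - ba) / a by
        gcongr <;> linarith)
      linarith
    · rw [if_neg hbc]
      by_cases hac : a * (ya - ba) ≤ (1 - θbar) ^ 2 / 2
      · rw [if_pos hac]
        have h1 : 2 * (ya - ba) / (1 - θbar) ≤ Real.sqrt (2 * (ya - ba) / a) := by
          rw [show (2 * (ya - ba) / (1 - θbar))
              = Real.sqrt ((2 * (ya - ba) / (1 - θbar)) ^ 2) from
            (Real.sqrt_sq (by positivity)).symm]
          apply Real.sqrt_le_sqrt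
          rw [div_pow, div_le_div_iff₀ (by positivity) ha]
          nlinarith
        have h2 : (1 - θbar) / (2 * b) ≤ (ya - ba) / (1 - θbar) := by
          rw [div_le_div_iff₀ (by positivity) hθ]
          nlinarith
        rw [show 2 * (ya - ba) / (1 - θbar) = 2 * ((ya - ba) / (1 - θbar)) by ring] at h1
        linarith
      · rw [if_neg hac]
        have : (1 - θbar) / (2 * b) ≤ (1 - θbar) / (2 * a) := by
          gcongr <;> linarith
        linarith
  have hαpos : 0 < αhat := by
    simp only [αhat]
    split_ifs with h
    · have : ba / ya < 1 := (div_lt_one hya).mpr hbya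
      exact div_pos (by linarith) hya
    · exact div_pos (pow_pos hθ 2) (by linarith)
  have hval : xUHat θbar αhat ba ya = 0 := by
    by_cases h : (1 + θbar) / 2 ≤ ba / ya
    · have hαeq : αhat = 2 * (ya - ba) / ya ^ 2 := by
        simp only [αhat, if_pos h]; field_simp
      have hcond' : ya * (1 + θbar) ≤ 2 * ba := by
        rw [div_le_div_iff₀ (by norm_num) hya] at h; linarith
      have hc : αhat * (ya - ba) ≤ (1 - θbar) ^ 2 / 2 := by
        rw [hαeq, div_mul_eq_mul_div, div_le_div_iff₀ (by positivity) (by norm_num)]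
        nlinarith [sq_nonneg (ya * (1 - θbar) - 2 * (ya - ba))]
      have harg : 2 * (ya - ba) / αhat = ya ^ 2 := by
        rw [hαeq]; field_simp
      rw [xUHat, if_pos hc, harg, Real.sqrt_sq hya.le, sub_self]
    · have hαeq : αhat = (1 - θbar) ^ 2 / (2 * (ba - θbar * ya)) := by
        simp only [αhat, θ, if_neg h]
      push_neg at h
      have hcond' : 2 * ba < ya * (1 + θbar) := by
        rw [div_lt_div_iff₀ hya (by norm_num)] at h; linarith
      have hd : 0 < ba - θbar * ya := by linarith
      have hc : ¬ αhat * (ya - ba) ≤ (1 - θbar) ^ 2 / 2 := by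
        rw [hαeq, div_mul_eq_mul_div, not_le, div_lt_div_iff₀ (by norm_num) (by positivity)]
        nlinarith [mul_pos (pow_pos hθ 2)
          (show (0:ℝ) < 2 * ya - 2 * ba - 2 * ba + 2 * θbar * ya by linarith)]
      rw [xUHat, if_neg hc, hαeq]
      field_simp
      ring
  refine ⟨hmono, hval, fun α hle => ?_⟩
  have hαpos' : 0 < α := lt_of_lt_of_le hαpos hle
  constructor
  · have := hmono (Set.mem_Ioi.mpr hαpos) (Set.mem_Ioi.mpr hαpos') hle
    simpa [hval] using this
  · rw [xUHat]
    split_ifs with h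
    · have := Real.sqrt_nonneg (2 * (ya - ba) / α)
      linarith
    · have h1 : 0 < (ya - ba) / (1 - θbar) := by positivity
      have h2 : 0 < (1 - θbar) / (2 * α) := by positivity
      linarith

end PAMM
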